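/- (Lemma 3, finite reducibility.) There exists a finite subset Ξ_k ⊆ Ξ such that v(Ξ_k) = v(Ξ), i.e., the semi-infinite dual program with constraints indexed by all of Ξ has the same optimal value as the program with constraints indexed only by the finitely many points of Ξ_k. -/

import Mathlib

open Filter Topology

section Aux

variable {E : Type*} [NormedAddCommGroup E] [NormedSpace ℝ E] {N : ℕ}

/-- Monotonicity of the dual value in the index set. -/
lemma dualValue_mono (ξhat : Fin N → E) (phat : Fin N → ℝ) (ε : ℝ) (c : E → ℝ)
    {S T : Set E} (hST : S ⊆ T) :
    sInf { w : EReal | ∃ α : ℝ, ∃ β : Fin N → ℝ, 0 ≤ α ∧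
      (∀ s, ∀ ξ ∈ S, c ξ ≤ α * ‖ξhat s - ξ‖ + β s) ∧
      w = ((ε * α + ∑ s, phat s * β s : ℝ) : EReal) } ≤
    sInf { w : EReal | ∃ α : ℝ, ∃ β : Fin N → ℝ, 0 ≤ α ∧
      (∀ s, ∀ ξ ∈ T, c ξ ≤ α * ‖ξhat s - ξ‖ + β s) ∧
      w = ((ε * α + ∑ s, phat s * β s : ℝ) : EReal) } := by
  apply sInf_le_sInf
  rintro w ⟨α, β, hα, hfeas, rfl⟩
  exact ⟨α, β, hα, fun s ξ hξ => hfeas s ξ (hST hξ), rfl⟩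

/-- Limit of maximizers along a convergent sequence of slopes. -/
lemma maximizer_limit (Ξ : Set E) (hcomp : IsCompact Ξ)
    (ξhat : Fin N → E) (c : E → ℝ) (hc : Continuous c)
    (αstar : ℝ) (t : ℕ → ℝ) (ht : Tendsto t atTop (𝓝 αstar))
    (x : ℕ → Fin N → E) (hxΞ : ∀ n s, x n s ∈ Ξ)
    (hxmax : ∀ n s, ∀ ξ ∈ Ξ, c ξ - t n * ‖ξhat s - ξ‖ ≤ c (x n s) - t n * ‖ξhat s - x n s‖) :
    ∃ y : Fin N → E, (∀ s, y s ∈ Ξ) ∧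
      (∀ s, ∀ ξ ∈ Ξ, c ξ - αstar * ‖ξhat s - ξ‖ ≤ c (y s) - αstar * ‖ξhat s - y s‖) ∧
      ∃ ψ : ℕ → ℕ, StrictMono ψ ∧
        ∀ s, Tendsto (fun n => ‖ξhat s - x (ψ n) s‖) atTop (𝓝 ‖ξhat s - y s‖) := by
  have hK : IsCompact (Set.univ.pi fun _ : Fin N => Ξ) :=
    isCompact_univ_pi fun _ => hcomp
  have hseq : IsSeqCompact (Set.univ.pi fun _ : Fin N => Ξ) := hK.isSeqCompact
  have hxK : ∀ n, x n ∈ Set.univ.pi fun _ : Fin N => Ξ := by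
    intro n
    exact fun s _ => hxΞ n s
  obtain ⟨y, hyK, ψ, hψ, hconv⟩ := hseq hxK
  have hys : ∀ s, Tendsto (fun n => x (ψ n) s) atTop (𝓝 (y s)) := by
    intro s
    exact (tendsto_pi_nhds.mp hconv) s
  have htψ : Tendsto (fun n => t (ψ n)) atTop (𝓝 αstar) :=
    ht.comp hψ.tendsto_atTop
  have hyΞ : ∀ s, y s ∈ Ξ := fun s => hyK s (Set.mem_univ s)
  have hnorm : ∀ s, Tendsto (fun n => ‖ξhat s - x (ψ n) s‖) atTop (𝓝 ‖ξhat s - y s‖) := by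
    intro s
    have : Continuous (fun z : E => ‖ξhat s - z‖) := (continuous_const.sub continuous_id).norm
    exact (this.tendsto (y s)).comp (hys s)
  refine ⟨y, hyΞ, ?_, ψ, hψ, hnorm⟩
  intro s ξ hξ
  have h1 : Tendsto (fun n => c ξ - t (ψ n) * ‖ξhat s - ξ‖) atTop
      (𝓝 (c ξ - αstar * ‖ξhat s - ξ‖)) :=
    tendsto_const_nhds.sub (htψ.mul tendsto_const_nhds)
  have h2 : Tendsto (fun n => c (x (ψ n) s) - t (ψ n) * ‖ξhat s - x (ψ n) s‖) atTop
      (𝓝 (c (y s) - αstar * ‖ξhat s - y s‖)) :=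
    ((hc.tendsto (y s)).comp (hys s)).sub (htψ.mul (hnorm s))
  exact le_of_tendsto_of_tendsto' h1 h2 (fun n => hxmax (ψ n) s ξ hξ)

end Aux

/-- The optimal value (in the extended reals) of the semi-infinite dual program with
constraints indexed by the subset `S` of the support. -/
noncomputable def dualValue {E : Type*} [NormedAddCommGroup E] [NormedSpace ℝ E]
    {N : ℕ} (ξhat : Fin N → E) (phat : Fin N → ℝ) (ε : ℝ) (c : E → ℝ)
    (S : Set E) : EReal :=
  sInf { w : EReal | ∃ α : ℝ, ∃ β : Fin N → ℝ, 0 ≤ α ∧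
    (∀ s, ∀ ξ ∈ S, c ξ ≤ α * ‖ξhat s - ξ‖ + β s) ∧
    w = ((ε * α + ∑ s, phat s * β s : ℝ) : EReal) }

/-- Lemma 3, finite reducibility: there is a finite subset `Ξₖ ⊆ Ξ` such that the
semi-infinite dual program over `Ξ` has the same optimal value as over `Ξₖ`. -/
theorem finitely_reducible
    {E : Type*} [NormedAddCommGroup E] [NormedSpace ℝ E]
    {N : ℕ} (hN : 1 ≤ N)
    (Ξ : Set E) (hne : Ξ.Nonempty) (hcomp : IsCompact Ξ)
    (ξhat : Fin N → E) (hmem : ∀ s, ξhat s ∈ Ξ)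
    (phat : Fin N → ℝ) (hp0 : ∀ s, 0 ≤ phat s) (hp1 : ∑ s, phat s = 1)
    (ε : ℝ) (hε : 0 ≤ ε) (c : E → ℝ) (hc : Continuous c) :
    ∃ Ξk : Set E, Ξk ⊆ Ξ ∧ Ξk.Finite ∧
      dualValue ξhat phat ε c Ξk = dualValue ξhat phat ε c Ξ := by
  haveI : Nonempty (Fin N) := ⟨⟨0, hN⟩⟩
  -- monotonicity
  have hmono : ∀ {S T : Set E}, S ⊆ T →
      dualValue ξhat phat ε c S ≤ dualValue ξhat phat ε c T := by
    intro S T hST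
    exact dualValue_mono ξhat phat ε c hST
  rcases eq_or_lt_of_le hε with hε0 | hεpos
  · -- ε = 0 case : take Ξk = range ξhat
    have hε0 : ε = 0 := hε0.symm
    set L : ℝ := ∑ s, phat s * c (ξhat s) with hL
    -- lower bound for any S containing the ξhat s
    have hlow : ∀ S : Set E, (∀ s, ξhat s ∈ S) →
        (L : EReal) ≤ dualValue ξhat phat ε c S := by
      intro S hS
      apply le_sInf
      rintro w ⟨α, β, hα, hfeas, rfl⟩
      rw [EReal.coe_le_coe_iff]
      have hβ : ∀ s, c (ξhat s) ≤ β s := by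
        intro s
        have := hfeas s (ξhat s) (hS s)
        simpa using this
      have h1 : L ≤ ∑ s, phat s * β s :=
        Finset.sum_le_sum fun s _ => mul_le_mul_of_nonneg_left (hβ s) (hp0 s)
      have h2 : 0 ≤ ε * α := mul_nonneg hε hα
      linarith
    -- upper bound for Ξ
    have hupper : ∀ η : ℝ, 0 < η →
        dualValue ξhat phat ε c Ξ ≤ ((L + η : ℝ) : EReal) := by
      intro η hη
      obtain ⟨ξM, hξM, hMax⟩ := hcomp.exists_isMaxOn hne hc.continuousOn
      set M : ℝ := c ξM with hM
      have hδ : ∀ s : Fin N, ∃ δ > 0, ∀ a : E, dist a (ξhat s) < δ →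
          dist (c a) (c (ξhat s)) < η := by
        intro s
        exact Metric.continuous_iff.mp hc (ξhat s) η hη
      choose δf hδpos hδf using hδ
      set δ : ℝ := Finset.univ.inf' Finset.univ_nonempty δf with hδdef
      have hδ0 : 0 < δ := by
        rw [hδdef, Finset.lt_inf'_iff]
        exact fun s _ => hδpos s
      set m : ℝ := Finset.univ.inf' Finset.univ_nonempty (fun s => c (ξhat s)) with hm
      have hmM : m ≤ M := by
        have h1 : m ≤ c (ξhat ⟨0, hN⟩) :=
          Finset.inf'_le _ (Finset.mem_univ _)
        exact h1.trans (hMax (hmem _))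
      set α0 : ℝ := (M - m) / δ with hα0def
      have hα0 : 0 ≤ α0 := div_nonneg (by linarith) hδ0.le
      have hfeas : ∀ s, ∀ ξ ∈ Ξ, c ξ ≤ α0 * ‖ξhat s - ξ‖ + (c (ξhat s) + η) := by
        intro s ξ hξ
        by_cases h : ‖ξhat s - ξ‖ < δ
        · have hdist : dist ξ (ξhat s) < δf s := by
            rw [dist_eq_norm, ← norm_sub_rev]
            exact h.trans_le (Finset.inf'_le _ (Finset.mem_univ s))
          have := hδf s ξ hdist
          rw [Real.dist_eq, abs_lt] at this
          have hnn : 0 ≤ α0 * ‖ξhat s - ξ‖ := mul_nonneg hα0 (norm_nonneg _)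
          linarith [this.2]
        · push_neg at h
          have h1 : α0 * δ ≤ α0 * ‖ξhat s - ξ‖ := mul_le_mul_of_nonneg_left h hα0
          have h2 : α0 * δ = M - m := div_mul_cancel₀ _ hδ0.ne'
          have h3 : c ξ ≤ M := hMax hξ
          have h4 : m ≤ c (ξhat s) := Finset.inf'_le _ (Finset.mem_univ s)
          linarith
      apply sInf_le
      refine ⟨α0, fun s => c (ξhat s) + η, hα0, hfeas, ?_⟩
      have : ε * α0 + ∑ s, phat s * (c (ξhat s) + η) = L + η := by
        rw [hε0]
        simp only [zero_mul, zero_add, mul_add, Finset.sum_add_distrib, ← Finset.sum_mul, hp1]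
        ring
      rw [this]
    have hΞle : dualValue ξhat phat ε c Ξ ≤ (L : EReal) := by
      apply le_of_forall_gt_imp_ge_of_dense
      intro a ha
      rcases eq_or_ne a ⊤ with rfl | haT
      · exact le_top
      have haB : a ≠ ⊥ := ((EReal.bot_lt_coe L).trans ha).ne'
      lift a to ℝ using ⟨haT, haB⟩
      rw [EReal.coe_lt_coe_iff] at ha
      have := hupper (a - L) (by linarith)
      calc dualValue ξhat phat ε c Ξ ≤ ((L + (a - L) : ℝ) : EReal) := this
        _ = (a : EReal) := by norm_num
    refine ⟨Set.range ξhat, ?_, Set.finite_range _, ?_⟩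
    · rintro x ⟨s, rfl⟩; exact hmem s
    · apply le_antisymm
      · exact hmono (by rintro x ⟨s, rfl⟩; exact hmem s)
      · calc dualValue ξhat phat ε c Ξ ≤ (L : EReal) := hΞle
          _ ≤ dualValue ξhat phat ε c (Set.range ξhat) :=
            hlow _ (fun s => ⟨s, rfl⟩)
  · -- ε > 0 case
    classical
    obtain ⟨φ, hφdef⟩ : ∃ _x : ℝ → Fin N → E → ℝ, _x = fun α s ξ => c ξ - α * ‖ξhat s - ξ‖ := ⟨_, rfl⟩
    have hφcont : ∀ α s, Continuous (φ α s) := by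
      intro α s
      simp only [hφdef]
      exact hc.sub (continuous_const.mul (continuous_const.sub continuous_id).norm)
    have himg : ∀ α s, IsCompact ((φ α s) '' Ξ) := fun α s => hcomp.image (hφcont α s)
    have himgne : ∀ α s, ((φ α s) '' Ξ).Nonempty := fun α s => hne.image _
    obtain ⟨f, hfdef⟩ : ∃ _x : Fin N → ℝ → ℝ, _x = fun s α => sSup ((φ α s) '' Ξ) := ⟨_, rfl⟩
    have hfmem : ∀ s α, ∃ z ∈ Ξ, φ α s z = f s α := by
      intro s α
      have h := (himg α s).sSup_mem (himgne α s)
      rw [Set.mem_image] at h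
      obtain ⟨z, hz, hzeq⟩ := h
      exact ⟨z, hz, by rw [hfdef]; exact hzeq⟩
    have hfle : ∀ s α, ∀ ξ ∈ Ξ, φ α s ξ ≤ f s α := by
      intro s α ξ hξ
      rw [hfdef]
      exact le_csSup (himg α s).bddAbove (Set.mem_image_of_mem _ hξ)
    -- a uniform bound on distances
    have hCex : ∀ s : Fin N, ∃ x ∈ Ξ, IsMaxOn (fun ξ => ‖ξhat s - ξ‖) Ξ x := fun s =>
      hcomp.exists_isMaxOn hne ((continuous_const.sub continuous_id).norm).continuousOn
    choose xC hxCmem hxC using hCex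
    obtain ⟨C, hCdef⟩ : ∃ _x : Fin N → ℝ, _x = fun s => ‖ξhat s - xC s‖ := ⟨_, rfl⟩
    have hfub : ∀ s a b, f s a ≤ f s b + C s * |a - b| := by
      intro s a b
      have hfeq : f s a = sSup ((φ a s) '' Ξ) := by rw [hfdef]
      rw [hfeq]
      apply csSup_le (himgne a s)
      rintro w ⟨ξ, hξ, rfl⟩
      have h1 : φ a s ξ = φ b s ξ + (b - a) * ‖ξhat s - ξ‖ := by
        simp only [hφdef]; ring
      have h2 : (b - a) * ‖ξhat s - ξ‖ ≤ C s * |a - b| := by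
        calc (b - a) * ‖ξhat s - ξ‖ ≤ |b - a| * ‖ξhat s - ξ‖ :=
              mul_le_mul_of_nonneg_right (le_abs_self _) (norm_nonneg _)
          _ ≤ |a - b| * C s := by
              rw [abs_sub_comm, hCdef]
              exact mul_le_mul_of_nonneg_left (hxC s hξ) (abs_nonneg _)
          _ = C s * |a - b| := by ring
      have h3 : φ b s ξ ≤ f s b := hfle s b ξ hξ
      linarith
    have hfcont : ∀ s, Continuous (f s) := by
      intro s
      have hC0 : 0 ≤ C s := by rw [hCdef]; exact norm_nonneg _
      have hlip : LipschitzWith (Real.toNNReal (C s)) (f s) := by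
        apply LipschitzWith.of_dist_le_mul
        intro a b
        rw [Real.dist_eq, Real.dist_eq, Real.coe_toNNReal _ hC0]
        rw [abs_sub_le_iff]
        constructor
        · have := hfub s a b
          linarith
        · have := hfub s b a
          rw [abs_sub_comm] at this
          linarith
      exact hlip.continuous
    obtain ⟨g, hgdef⟩ : ∃ _x : ℝ → ℝ, _x = fun α => ε * α + ∑ s, phat s * f s α := ⟨_, rfl⟩
    have hgcont : Continuous g := by
      rw [hgdef]
      exact (continuous_const.mul continuous_id).add
        (continuous_finset_sum _ fun s _ => continuous_const.mul (hfcont s))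
    obtain ⟨L, hLdef⟩ : ∃ _x : ℝ, _x = ∑ s, phat s * c (ξhat s) := ⟨_, rfl⟩
    have hfgeL : ∀ s α, c (ξhat s) ≤ f s α := by
      intro s α
      have := hfle s α (ξhat s) (hmem s)
      simp only [hφdef, sub_self, norm_zero, mul_zero, sub_zero] at this
      exact this
    have hgL : ∀ α, ε * α + L ≤ g α := by
      intro α
      have h : ∑ s, phat s * c (ξhat s) ≤ ∑ s, phat s * f s α :=
        Finset.sum_le_sum fun s _ => mul_le_mul_of_nonneg_left (hfgeL s α) (hp0 s)
      simp only [hgdef, hLdef]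
      linarith
    obtain ⟨R, hRdef⟩ : ∃ _x : ℝ, _x = max 1 ((g 0 - L) / ε + 1) := ⟨_, rfl⟩
    have hR0 : (0:ℝ) ≤ R := by rw [hRdef]; exact le_trans zero_le_one (le_max_left _ _)
    obtain ⟨αs, hαsmem, hαsmin⟩ :=
      isCompact_Icc.exists_isMinOn (Set.nonempty_Icc.mpr hR0) hgcont.continuousOn
    have hαs0 : 0 ≤ αs := hαsmem.1
    have hglob : ∀ α, 0 ≤ α → g αs ≤ g α := by
      intro α hα
      by_cases hRle : α ≤ R
      · exact hαsmin ⟨hα, hRle⟩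
      · push_neg at hRle
        have h0 : g αs ≤ g 0 := hαsmin ⟨le_refl 0, hR0⟩
        have h1 : (g 0 - L) / ε + 1 ≤ R := by rw [hRdef]; exact le_max_right _ _
        have h2 : (g 0 - L) / ε < α := by linarith
        have h3 : g 0 - L < ε * α := by
          have := (div_lt_iff₀ hεpos).mp h2
          linarith
        have h4 := hgL α
        linarith
    -- the argmax sets at αs
    obtain ⟨I, hIdef⟩ : ∃ _x : Fin N → Set E, _x = fun s => Ξ ∩ {z | f s αs ≤ φ αs s z} := ⟨_, rfl⟩
    have hIcomp : ∀ s, IsCompact (I s) := by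
      intro s
      rw [hIdef]
      exact hcomp.inter_right (isClosed_le continuous_const (hφcont αs s))
    have hIne : ∀ s, (I s).Nonempty := by
      intro s
      obtain ⟨z, hz, hzeq⟩ := hfmem s αs
      rw [hIdef]
      exact ⟨z, hz, hzeq.ge⟩
    have hIsub : ∀ s, I s ⊆ Ξ := by
      intro s
      rw [hIdef]
      exact Set.inter_subset_left
    have hImax : ∀ s, ∀ z ∈ I s, ∀ ξ ∈ Ξ, φ αs s ξ ≤ φ αs s z := by
      intro s z hz ξ hξ
      rw [hIdef] at hz
      exact (hfle s αs ξ hξ).trans hz.2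
    have hIeq : ∀ s, ∀ z ∈ I s, φ αs s z = f s αs := by
      intro s z hz
      have hz' := hz
      rw [hIdef] at hz'
      exact le_antisymm (hfle s αs z (hIsub s hz)) hz'.2
    have hImem : ∀ s z, z ∈ Ξ → (∀ ξ ∈ Ξ, φ αs s ξ ≤ φ αs s z) → z ∈ I s := by
      intro s z hzΞ hzmax
      rw [hIdef]
      refine ⟨hzΞ, ?_⟩
      obtain ⟨w, hw, hweq⟩ := hfmem s αs
      calc f s αs = φ αs s w := hweq.symm
        _ ≤ φ αs s z := hzmax w hw
    -- extreme maximizers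
    have hξ1ex : ∀ s, ∃ z ∈ I s, IsMinOn (fun z => ‖ξhat s - z‖) (I s) z := fun s =>
      (hIcomp s).exists_isMinOn (hIne s) ((continuous_const.sub continuous_id).norm).continuousOn
    have hξ2ex : ∀ s, ∃ z ∈ I s, IsMaxOn (fun z => ‖ξhat s - z‖) (I s) z := fun s =>
      (hIcomp s).exists_isMaxOn (hIne s) ((continuous_const.sub continuous_id).norm).continuousOn
    choose ξ1 hξ1I hξ1min using hξ1ex
    choose ξ2 hξ2I hξ2max using hξ2ex
    obtain ⟨Smin, hSmindef⟩ : ∃ _x : ℝ, _x = ∑ s, phat s * ‖ξhat s - ξ1 s‖ := ⟨_, rfl⟩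
    obtain ⟨Splus, hSplusdef⟩ : ∃ _x : ℝ, _x = ∑ s, phat s * ‖ξhat s - ξ2 s‖ := ⟨_, rfl⟩
    have hSmle : Smin ≤ Splus := by
      rw [hSmindef, hSplusdef]
      exact Finset.sum_le_sum fun s _ =>
        mul_le_mul_of_nonneg_left (hξ1min s (hξ2I s)) (hp0 s)
    -- Claim A : Smin ≤ ε
    have hA : Smin ≤ ε := by
      obtain ⟨t, htdef⟩ : ∃ _x : ℕ → ℝ, _x = fun n : ℕ => αs + 1 / ((n : ℝ) + 1) := ⟨_, rfl⟩
      have hxex : ∀ n (s : Fin N), ∃ z ∈ Ξ, φ (t n) s z = f s (t n) := fun n s => hfmem s (t n)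
      choose x hxΞ hxeq using hxex
      have hn : ∀ n, ∑ s, phat s * ‖ξhat s - x n s‖ ≤ ε := by
        intro n
        have hun : (0:ℝ) < 1 / ((n : ℝ) + 1) := by positivity
        have htn : 0 ≤ t n := by simp only [htdef]; linarith [hαs0, hun]
        have hfs : ∀ s, f s (t n) ≤ f s αs - (1 / ((n : ℝ) + 1)) * ‖ξhat s - x n s‖ := by
          intro s
          have h1 : φ αs s (x n s) ≤ f s αs := hfle s αs _ (hxΞ n s)
          have h2 : f s (t n) = φ αs s (x n s) - (1 / ((n : ℝ) + 1)) * ‖ξhat s - x n s‖ := by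
            rw [← hxeq n s]
            simp only [hφdef, htdef]
            ring
          linarith
        have hsum : ∑ s, phat s * f s (t n) ≤
            (∑ s, phat s * f s αs) - (1 / ((n : ℝ) + 1)) * ∑ s, phat s * ‖ξhat s - x n s‖ := by
          calc ∑ s, phat s * f s (t n)
              ≤ ∑ s, phat s * (f s αs - (1 / ((n : ℝ) + 1)) * ‖ξhat s - x n s‖) :=
                Finset.sum_le_sum fun s _ => mul_le_mul_of_nonneg_left (hfs s) (hp0 s)
            _ = (∑ s, phat s * f s αs) - (1 / ((n : ℝ) + 1)) * ∑ s, phat s * ‖ξhat s - x n s‖ := by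
                rw [Finset.mul_sum, ← Finset.sum_sub_distrib]
                exact Finset.sum_congr rfl fun s _ => by ring
        have hg1 := hglob (t n) htn
        simp only [hgdef] at hg1
        have ht' : ε * t n = ε * αs + ε * (1 / ((n : ℝ) + 1)) := by
          simp only [htdef]; ring
        have hfin : (1 / ((n : ℝ) + 1)) * ∑ s, phat s * ‖ξhat s - x n s‖ ≤
            (1 / ((n : ℝ) + 1)) * ε := by
          linarith [hsum, hg1, ht']
        exact (mul_le_mul_iff_right₀ hun).mp hfin
      have htt : Tendsto t atTop (𝓝 αs) := by
        have h0 : Tendsto (fun n : ℕ => 1 / ((n : ℝ) + 1)) atTop (𝓝 0) :=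
          tendsto_one_div_add_atTop_nhds_zero_nat
        have := tendsto_const_nhds.add h0 (f := fun _ : ℕ => αs) (x := atTop)
        simpa [htdef] using this
      have hxmax : ∀ n (s : Fin N), ∀ ξ ∈ Ξ,
          c ξ - t n * ‖ξhat s - ξ‖ ≤ c (x n s) - t n * ‖ξhat s - x n s‖ := by
        intro n s ξ hξ
        have h1 := hfle s (t n) ξ hξ
        rw [← hxeq n s] at h1
        simpa only [hφdef] using h1
      obtain ⟨y, hyΞ, hymax, ψ, hψ, hynorm⟩ :=
        maximizer_limit Ξ hcomp ξhat c hc αs t htt x hxΞ hxmax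
      have hyI : ∀ s, y s ∈ I s := by
        intro s
        apply hImem s (y s) (hyΞ s)
        intro ξ hξ
        simpa only [hφdef] using hymax s ξ hξ
      have hlim : Tendsto (fun n => ∑ s, phat s * ‖ξhat s - x (ψ n) s‖) atTop
          (𝓝 (∑ s, phat s * ‖ξhat s - y s‖)) :=
        tendsto_finset_sum _ fun s _ => tendsto_const_nhds.mul (hynorm s)
      have hyle : ∑ s, phat s * ‖ξhat s - y s‖ ≤ ε :=
        le_of_tendsto' hlim fun n => hn (ψ n)
      calc Smin ≤ ∑ s, phat s * ‖ξhat s - y s‖ := by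
            rw [hSmindef]
            exact Finset.sum_le_sum fun s _ =>
              mul_le_mul_of_nonneg_left (hξ1min s (hyI s)) (hp0 s)
        _ ≤ ε := hyle
    -- Claim B : if αs > 0 then ε ≤ Splus
    have hB : 0 < αs → ε ≤ Splus := by
      intro hpos
      obtain ⟨t, htdef⟩ : ∃ _x : ℕ → ℝ, _x = fun n : ℕ => αs - αs * (1 / ((n : ℝ) + 1)) := ⟨_, rfl⟩
      have hxex : ∀ n (s : Fin N), ∃ z ∈ Ξ, φ (t n) s z = f s (t n) := fun n s => hfmem s (t n)
      choose x hxΞ hxeq using hxex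
      have hn : ∀ n, ε ≤ ∑ s, phat s * ‖ξhat s - x n s‖ := by
        intro n
        have h1n : 1 / ((n : ℝ) + 1) ≤ 1 := by
          rw [div_le_one (by positivity)]
          linarith [Nat.cast_nonneg (α := ℝ) n]
        have hun : (0:ℝ) < αs * (1 / ((n : ℝ) + 1)) := by positivity
        have htn : 0 ≤ t n := by
          simp only [htdef]
          nlinarith [mul_le_mul_of_nonneg_left h1n hpos.le]
        have hfs : ∀ s, f s (t n) ≤ f s αs + (αs * (1 / ((n : ℝ) + 1))) * ‖ξhat s - x n s‖ := by
          intro s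
          have h1 : φ αs s (x n s) ≤ f s αs := hfle s αs _ (hxΞ n s)
          have h2 : f s (t n) = φ αs s (x n s) + (αs * (1 / ((n : ℝ) + 1))) * ‖ξhat s - x n s‖ := by
            rw [← hxeq n s]
            simp only [hφdef, htdef]
            ring
          linarith
        have hsum : ∑ s, phat s * f s (t n) ≤
            (∑ s, phat s * f s αs) +
              (αs * (1 / ((n : ℝ) + 1))) * ∑ s, phat s * ‖ξhat s - x n s‖ := by
          calc ∑ s, phat s * f s (t n)
              ≤ ∑ s, phat s * (f s αs + (αs * (1 / ((n : ℝ) + 1))) * ‖ξhat s - x n s‖) :=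
                Finset.sum_le_sum fun s _ => mul_le_mul_of_nonneg_left (hfs s) (hp0 s)
            _ = (∑ s, phat s * f s αs) +
                (αs * (1 / ((n : ℝ) + 1))) * ∑ s, phat s * ‖ξhat s - x n s‖ := by
                rw [Finset.mul_sum, ← Finset.sum_add_distrib]
                exact Finset.sum_congr rfl fun s _ => by ring
        have hg1 := hglob (t n) htn
        simp only [hgdef] at hg1
        have ht' : ε * t n = ε * αs - ε * (αs * (1 / ((n : ℝ) + 1))) := by
          simp only [htdef]; ring
        have hfin : (αs * (1 / ((n : ℝ) + 1))) * ε ≤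
            (αs * (1 / ((n : ℝ) + 1))) * ∑ s, phat s * ‖ξhat s - x n s‖ := by
          linarith [hsum, hg1, ht']
        exact (mul_le_mul_iff_right₀ hun).mp hfin
      have htt : Tendsto t atTop (𝓝 αs) := by
        have h0 : Tendsto (fun n : ℕ => 1 / ((n : ℝ) + 1)) atTop (𝓝 0) :=
          tendsto_one_div_add_atTop_nhds_zero_nat
        have h1 : Tendsto (fun n : ℕ => αs - αs * (1 / ((n : ℝ) + 1))) atTop
            (𝓝 (αs - αs * 0)) := tendsto_const_nhds.sub (tendsto_const_nhds.mul h0)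
        simpa [htdef] using h1
      have hxmax : ∀ n (s : Fin N), ∀ ξ ∈ Ξ,
          c ξ - t n * ‖ξhat s - ξ‖ ≤ c (x n s) - t n * ‖ξhat s - x n s‖ := by
        intro n s ξ hξ
        have h1 := hfle s (t n) ξ hξ
        rw [← hxeq n s] at h1
        simpa only [hφdef] using h1
      obtain ⟨y, hyΞ, hymax, ψ, hψ, hynorm⟩ :=
        maximizer_limit Ξ hcomp ξhat c hc αs t htt x hxΞ hxmax
      have hyI : ∀ s, y s ∈ I s := by
        intro s
        apply hImem s (y s) (hyΞ s)
        intro ξ hξ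
        simpa only [hφdef] using hymax s ξ hξ
      have hlim : Tendsto (fun n => ∑ s, phat s * ‖ξhat s - x (ψ n) s‖) atTop
          (𝓝 (∑ s, phat s * ‖ξhat s - y s‖)) :=
        tendsto_finset_sum _ fun s _ => tendsto_const_nhds.mul (hynorm s)
      have hyge : ε ≤ ∑ s, phat s * ‖ξhat s - y s‖ :=
        ge_of_tendsto' hlim fun n => hn (ψ n)
      calc ε ≤ ∑ s, phat s * ‖ξhat s - y s‖ := hyge
        _ ≤ Splus := by
            rw [hSplusdef]
            exact Finset.sum_le_sum fun s _ =>
              mul_le_mul_of_nonneg_left (hξ2max s (hyI s)) (hp0 s)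
    -- choose the convex combination weight θ
    obtain ⟨θ, hθ0, hθ1, hθle, hθeq⟩ : ∃ θ : ℝ, 0 ≤ θ ∧ θ ≤ 1 ∧
        θ * Smin + (1 - θ) * Splus ≤ ε ∧ (0 < αs → θ * Smin + (1 - θ) * Splus = ε) := by
      rcases eq_or_lt_of_le hαs0 with h0 | hpos
      · exact ⟨1, zero_le_one, le_refl 1, by simpa using hA,
          fun h => absurd h (by rw [← h0]; exact lt_irrefl 0)⟩
      · have hB' := hB hpos
        by_cases hSS : Splus - Smin = 0
        · refine ⟨1, zero_le_one, le_refl 1, by simpa using hA, fun _ => ?_⟩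
          have : Smin = Splus := by linarith
          simp only [one_mul, sub_self, zero_mul, add_zero]
          linarith
        · have hlt : 0 < Splus - Smin := lt_of_le_of_ne (by linarith) (Ne.symm hSS)
          refine ⟨(Splus - ε) / (Splus - Smin), div_nonneg (by linarith) hlt.le, ?_, ?_, fun _ => ?_⟩
          · rw [div_le_one hlt]; linarith
          · have : (Splus - ε) / (Splus - Smin) * Smin + (1 - (Splus - ε) / (Splus - Smin)) * Splus = ε := by
              field_simp
              ring
            linarith [this.le]
          · field_simp
            ring
    -- the finite set
    refine ⟨Set.range ξ1 ∪ Set.range ξ2, ?_, (Set.finite_range _).union (Set.finite_range _), ?_⟩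
    · rintro z (⟨s, rfl⟩ | ⟨s, rfl⟩)
      · exact hIsub s (hξ1I s)
      · exact hIsub s (hξ2I s)
    · apply le_antisymm
      · exact hmono (by
          rintro z (⟨s, rfl⟩ | ⟨s, rfl⟩)
          · exact hIsub s (hξ1I s)
          · exact hIsub s (hξ2I s))
      · -- dualValue Ξ ≤ g αs ≤ dualValue Ξk
        have hup : dualValue ξhat phat ε c Ξ ≤ ((g αs : ℝ) : EReal) := by
          apply sInf_le
          refine ⟨αs, fun s => f s αs, hαs0, ?_, ?_⟩
          · intro s ξ hξ
            have := hfle s αs ξ hξ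
            simp only [hφdef] at this
            linarith
          · simp only [hgdef]
        have hdown : ((g αs : ℝ) : EReal) ≤
            dualValue ξhat phat ε c (Set.range ξ1 ∪ Set.range ξ2) := by
          apply le_sInf
          rintro w ⟨α, β, hα, hfeas, rfl⟩
          rw [EReal.coe_le_coe_iff]
          have hβ1 : ∀ s, f s αs + (αs - α) * ‖ξhat s - ξ1 s‖ ≤ β s := by
            intro s
            have h1 := hfeas s (ξ1 s) (Set.mem_union_left _ ⟨s, rfl⟩)
            have h2 : c (ξ1 s) = f s αs + αs * ‖ξhat s - ξ1 s‖ := by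
              have := hIeq s (ξ1 s) (hξ1I s)
              simp only [hφdef] at this
              linarith
            linarith
          have hβ2 : ∀ s, f s αs + (αs - α) * ‖ξhat s - ξ2 s‖ ≤ β s := by
            intro s
            have h1 := hfeas s (ξ2 s) (Set.mem_union_right _ ⟨s, rfl⟩)
            have h2 : c (ξ2 s) = f s αs + αs * ‖ξhat s - ξ2 s‖ := by
              have := hIeq s (ξ2 s) (hξ2I s)
              simp only [hφdef] at this
              linarith
            linarith
          have hβ : ∀ s, f s αs + (αs - α) *
              (θ * ‖ξhat s - ξ1 s‖ + (1 - θ) * ‖ξhat s - ξ2 s‖) ≤ β s := by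
            intro s
            have e1 := mul_le_mul_of_nonneg_left (hβ1 s) hθ0
            have e2 := mul_le_mul_of_nonneg_left (hβ2 s) (by linarith : (0:ℝ) ≤ 1 - θ)
            nlinarith
          have hsum : (∑ s, phat s * f s αs) +
              (αs - α) * (θ * Smin + (1 - θ) * Splus) ≤ ∑ s, phat s * β s := by
            have h1 : ∑ s, phat s * (f s αs + (αs - α) *
                (θ * ‖ξhat s - ξ1 s‖ + (1 - θ) * ‖ξhat s - ξ2 s‖)) ≤ ∑ s, phat s * β s :=
              Finset.sum_le_sum fun s _ => mul_le_mul_of_nonneg_left (hβ s) (hp0 s)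
            have h2 : ∑ s, phat s * (f s αs + (αs - α) *
                (θ * ‖ξhat s - ξ1 s‖ + (1 - θ) * ‖ξhat s - ξ2 s‖)) =
                (∑ s, phat s * f s αs) + (αs - α) * (θ * Smin + (1 - θ) * Splus) := by
              have e1 : (αs - α) * (θ * Smin + (1 - θ) * Splus)
                  = ∑ s, (αs - α) * (θ * (phat s * ‖ξhat s - ξ1 s‖) +
                      (1 - θ) * (phat s * ‖ξhat s - ξ2 s‖)) := by
                rw [hSmindef, hSplusdef, Finset.mul_sum, Finset.mul_sum,
                  ← Finset.sum_add_distrib, Finset.mul_sum]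
              rw [e1, ← Finset.sum_add_distrib]
              exact Finset.sum_congr rfl fun s _ => by ring
            linarith
          have hslope : ε * (αs - α) ≤ (αs - α) * (θ * Smin + (1 - θ) * Splus) := by
            rcases eq_or_lt_of_le hαs0 with h0 | hpos
            · have hα0 : αs - α ≤ 0 := by linarith
              nlinarith [mul_nonneg (neg_nonneg.mpr hα0) (sub_nonneg.mpr hθle)]
            · rw [hθeq hpos]; linarith [mul_comm (αs - α) ε]
          simp only [hgdef]
          linarith [hsum, hslope]
        exact hup.trans hdown
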